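/- Let Σ_r be an n×n symmetric positive definite matrix, Σ_x an m×m symmetric positive definite matrix, Σ_rx an n×m real matrix, and γ > 0. Then for every real m×n matrix A, Tr(A Σ_rx) − (γ/2) Tr(Σ_x A Σ_r A') ≤ (1/(2γ)) Tr(Σ_x^{-1} Σ_rx' Σ_r^{-1} Σ_rx), with equality if and only if A = γ^{-1} Σ_x^{-1} Σ_rx' Σ_r^{-1}. In particular, the objective Tr(A Σ_rx) − (γ/2) Tr(Σ_x A Σ_r A') is maximized at A = γ^{-1} Σ_x^{-1} Σ_rx' Σ_r^{-1}. -/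

import Mathlib

open Matrix

lemma trace_mul_transpose_self_nonneg {m n : ℕ} (N : Matrix (Fin m) (Fin n) ℝ) :
    0 ≤ (N * Nᵀ).trace := by
  simp only [trace, diag, mul_apply, transpose_apply]
  exact Finset.sum_nonneg fun i _ => Finset.sum_nonneg fun j _ => mul_self_nonneg _

lemma trace_mul_transpose_self_eq_zero {m n : ℕ} (N : Matrix (Fin m) (Fin n) ℝ) :
    (N * Nᵀ).trace = 0 ↔ N = 0 := by
  constructor
  · intro h
    ext i j
    simp only [trace, diag, mul_apply, transpose_apply] at h
    have h1 := (Finset.sum_eq_zero_iff_of_nonneg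
      (fun i _ => Finset.sum_nonneg fun j _ => mul_self_nonneg (N i j))).mp h i (Finset.mem_univ i)
    have h2 := (Finset.sum_eq_zero_iff_of_nonneg
      (fun j _ => mul_self_nonneg (N i j))).mp h1 j (Finset.mem_univ j)
    simpa using mul_self_eq_zero.mp h2
  · rintro rfl; simp

/-- for SPD `Sr`, `Sx`, any `Srx` and `γ > 0`, the objective
`Tr(A Srx) − (γ/2) Tr(Sx A Sr A')` is bounded by `(1/(2γ)) Tr(Sx⁻¹ Srx' Sr⁻¹ Srx)`,
with equality iff `A = γ⁻¹ Sx⁻¹ Srx' Sr⁻¹`. -/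
theorem approx_mean_variance_optimum {n m : ℕ}
    (Sr : Matrix (Fin n) (Fin n) ℝ) (Sx : Matrix (Fin m) (Fin m) ℝ)
    (hr : Sr.PosDef) (hx : Sx.PosDef)
    (Srx : Matrix (Fin n) (Fin m) ℝ) (γ : ℝ) (hγ : 0 < γ)
    (A : Matrix (Fin m) (Fin n) ℝ) :
    (A * Srx).trace - γ / 2 * (Sx * A * Sr * Aᵀ).trace
      ≤ 1 / (2 * γ) * (Sx⁻¹ * Srxᵀ * Sr⁻¹ * Srx).trace ∧
    ((A * Srx).trace - γ / 2 * (Sx * A * Sr * Aᵀ).trace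
        = 1 / (2 * γ) * (Sx⁻¹ * Srxᵀ * Sr⁻¹ * Srx).trace
      ↔ A = γ⁻¹ • (Sx⁻¹ * Srxᵀ * Sr⁻¹)) := by
  have hdx : IsUnit Sx.det := (Matrix.isUnit_iff_isUnit_det _).mp hx.isUnit
  have hdr : IsUnit Sr.det := (Matrix.isUnit_iff_isUnit_det _).mp hr.isUnit
  have hSxT : Sxᵀ = Sx := by simpa using hx.isHermitian.eq
  have hSrT : Srᵀ = Sr := by simpa using hr.isHermitian.eq
  have hiX : Sx⁻¹ᵀ = Sx⁻¹ := by rw [Matrix.transpose_nonsing_inv, hSxT]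
  have hiR : Sr⁻¹ᵀ = Sr⁻¹ := by rw [Matrix.transpose_nonsing_inv, hSrT]
  have hx2 : Sx⁻¹ * Sx = 1 := Matrix.nonsing_inv_mul _ hdx
  have cXl : ∀ {p : ℕ} (Z : Matrix (Fin m) (Fin p) ℝ), Sx * (Sx⁻¹ * Z) = Z :=
    fun Z => Matrix.mul_nonsing_inv_cancel_left _ _ hdx
  have cRl : ∀ {p : ℕ} (Z : Matrix (Fin n) (Fin p) ℝ), Sr * (Sr⁻¹ * Z) = Z :=
    fun Z => Matrix.mul_nonsing_inv_cancel_left _ _ hdr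
  have cRl' : ∀ {p : ℕ} (Z : Matrix (Fin n) (Fin p) ℝ), Sr⁻¹ * (Sr * Z) = Z :=
    fun Z => Matrix.nonsing_inv_mul_cancel_left _ _ hdr
  set M : Matrix (Fin m) (Fin n) ℝ := Sx⁻¹ * Srxᵀ * Sr⁻¹ with hM
  set C : Matrix (Fin m) (Fin n) ℝ := γ⁻¹ • M with hC
  set B : Matrix (Fin m) (Fin n) ℝ := A - C with hB
  have hMT : Mᵀ = Sr⁻¹ * Srx * Sx⁻¹ := by
    simp only [hM, transpose_mul, hiX, hiR, transpose_transpose, Matrix.mul_assoc]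
  -- core trace identities
  have core2 : (Sx * A * Sr * Mᵀ).trace = (A * Srx).trace := by
    rw [hMT]
    have e : Sx * A * Sr * (Sr⁻¹ * Srx * Sx⁻¹) = Sx * (A * (Srx * Sx⁻¹)) := by
      simp only [Matrix.mul_assoc, cRl]
    rw [e, trace_mul_comm]
    simp only [Matrix.mul_assoc, hx2, Matrix.mul_one]
  have core3 : (Sx * M * Sr * Aᵀ).trace = (A * Srx).trace := by
    have e : Sx * M * Sr * Aᵀ = Srxᵀ * Aᵀ := by
      simp only [hM, Matrix.mul_assoc, cXl, cRl']
    rw [e, ← transpose_mul, trace_transpose]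
  have core4 : (Sx * M * Sr * Mᵀ).trace = (M * Srx).trace := by
    rw [hMT]
    have e : Sx * M * Sr * (Sr⁻¹ * Srx * Sx⁻¹) = Srxᵀ * (Sr⁻¹ * (Srx * Sx⁻¹)) := by
      simp only [hM, Matrix.mul_assoc, cXl, cRl', cRl]
    rw [e, trace_mul_comm]
    simp only [hM, Matrix.mul_assoc, hx2, Matrix.mul_one]
    rw [trace_mul_comm]
    simp only [Matrix.mul_assoc]
    rw [trace_mul_comm]
    simp only [Matrix.mul_assoc]
  have h2 : (Sx * A * Sr * Cᵀ).trace = γ⁻¹ * (A * Srx).trace := by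
    simp only [hC, transpose_smul, Matrix.mul_smul, trace_smul, smul_eq_mul, core2]
  have h3 : (Sx * C * Sr * Aᵀ).trace = γ⁻¹ * (A * Srx).trace := by
    simp only [hC, Matrix.mul_smul, Matrix.smul_mul, trace_smul, smul_eq_mul, core3]
  have h4 : (Sx * C * Sr * Cᵀ).trace = γ⁻¹ * (γ⁻¹ * (M * Srx).trace) := by
    simp only [hC, transpose_smul, Matrix.mul_smul, Matrix.smul_mul, trace_smul,
      smul_eq_mul, core4]
  have expand : Sx * B * Sr * Bᵀ
      = Sx * A * Sr * Aᵀ - Sx * C * Sr * Aᵀ - (Sx * A * Sr * Cᵀ - Sx * C * Sr * Cᵀ) := by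
    rw [hB]
    simp only [transpose_sub, Matrix.mul_sub, Matrix.sub_mul]
  have key : (Sx * B * Sr * Bᵀ).trace
      = (Sx * A * Sr * Aᵀ).trace - 2 * γ⁻¹ * (A * Srx).trace
        + γ⁻¹ * γ⁻¹ * (M * Srx).trace := by
    rw [expand, trace_sub, trace_sub, trace_sub, h2, h3, h4]; ring
  -- positivity via square roots
  open scoped MatrixOrder in
  set X := CFC.sqrt Sx with hX
  open scoped MatrixOrder in
  set R := CFC.sqrt Sr with hR
  open scoped MatrixOrder in
  have hX2 : X * X = Sx := CFC.sqrt_mul_sqrt_self Sx hx.posSemidef.nonneg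
  open scoped MatrixOrder in
  have hR2 : R * R = Sr := CFC.sqrt_mul_sqrt_self Sr hr.posSemidef.nonneg
  open scoped MatrixOrder in
  have hXT : Xᵀ = X := by simpa using (CFC.sqrt_nonneg Sx).posSemidef.1.eq
  open scoped MatrixOrder in
  have hRT : Rᵀ = R := by simpa using (CFC.sqrt_nonneg Sr).posSemidef.1.eq
  have hdX : IsUnit X.det := by
    have h := hdx; rw [← hX2, det_mul] at h; exact isUnit_of_mul_isUnit_left h
  have hdR : IsUnit R.det := by
    have h := hdr; rw [← hR2, det_mul] at h; exact isUnit_of_mul_isUnit_left h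
  set N : Matrix (Fin m) (Fin n) ℝ := X * B * R with hN
  have hBtr : (Sx * B * Sr * Bᵀ).trace = (N * Nᵀ).trace := by
    calc (Sx * B * Sr * Bᵀ).trace
        = (X * (X * (B * (R * (R * Bᵀ))))).trace := by
          rw [← hX2, ← hR2]; simp only [Matrix.mul_assoc]
      _ = ((X * (B * (R * (R * Bᵀ)))) * X).trace := trace_mul_comm _ _
      _ = (N * Nᵀ).trace := by
          simp only [hN, transpose_mul, hXT, hRT, Matrix.mul_assoc]
  have htr0 : 0 ≤ (N * Nᵀ).trace := trace_mul_transpose_self_nonneg N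
  have hiff : (N * Nᵀ).trace = 0 ↔ A = C := by
    rw [trace_mul_transpose_self_eq_zero]
    constructor
    · intro h0
      have hBR : B * R = 0 := by
        have h := congrArg (fun Z => X⁻¹ * Z) h0
        simpa [hN, Matrix.mul_assoc, Matrix.nonsing_inv_mul_cancel_left _ _ hdX] using h
      have hB0 : B = 0 := by
        have h := congrArg (fun Z => Z * R⁻¹) hBR
        simpa [Matrix.mul_nonsing_inv_cancel_right _ _ hdR] using h
      have h' : A - C = 0 := hB ▸ hB0
      exact sub_eq_zero.mp h'
    · intro hAC
      have hB0 : B = 0 := by rw [hB, hAC, sub_self]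
      rw [hN, hB0]; simp
  have main : (A * Srx).trace - γ / 2 * (Sx * A * Sr * Aᵀ).trace
      = 1 / (2 * γ) * (M * Srx).trace - γ / 2 * (N * Nᵀ).trace := by
    rw [← hBtr, key]; field_simp; ring
  have hγ2 : (0:ℝ) < γ / 2 := by linarith
  constructor
  · rw [main]; nlinarith
  · rw [main]
    constructor
    · intro h
      have h' : γ / 2 * (N * Nᵀ).trace = 0 := by linarith
      have ht : (N * Nᵀ).trace = 0 := by
        rcases mul_eq_zero.mp h' with h'' | h''
        · exact absurd h'' (ne_of_gt hγ2)
        · exact h''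
      exact hiff.mp ht
    · intro hAC
      rw [hiff.mpr hAC]
      ring
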